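/- Under the assumptions $s_N \to 0$, $N\mu_N \to \infty$, $N\mu_N^2/s_N \to 0$, and $r_N\ln_+(N r_N)/s_N \to 0$, for sufficiently large $N$ the quantity $t^*_N(r_N) = \frac{1}{s_N}\ln\left(\frac{N s_N^3}{\mu_N \cdot \max\{N\mu_N^2, r_N\ln_+(N r_N)\}}\right)$ satisfies $\frac{2}{3} t^*_N(0) < t^*_N(r_N) \le t^*_N(0)$, where $t^*_N(0) = \frac{1}{s_N}\ln\left(\frac{s_N^3}{\mu_N^3}\right)$. -/

import Mathlib

open Filter

/-- With `t*_N(r) = (1/s_N) log (N s_N³ / (μ_N max{N μ_N², r ln₊(N r)}))`, under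
`s_N ≪ 1`, `1 ≪ N μ_N`, `N μ_N² ≪ s_N`, `r_N ln₊(N r_N) ≪ s_N`, for large `N`
one has `(2/3) t*_N(0) < t*_N(r_N) ≤ t*_N(0)` where `t*_N(0) = (1/s_N) log(s_N³/μ_N³)`. -/
theorem stmt3 (μ s r : ℕ → ℝ)
    (hμ : ∀ N, μ N ∈ Set.Ioo (0 : ℝ) 1)
    (hs : ∀ N, s N ∈ Set.Ioc (0 : ℝ) (1/2))
    (hr : ∀ N, r N ∈ Set.Ico (0 : ℝ) 1)
    (h0 : Tendsto s atTop (nhds 0))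
    (h1 : Tendsto (fun N : ℕ => (N : ℝ) * μ N) atTop atTop)
    (h2 : Tendsto (fun N : ℕ => (N : ℝ) * (μ N)^2 / s N) atTop (nhds 0))
    (h3 : Tendsto (fun N : ℕ => r N * max (Real.log ((N : ℝ) * r N)) 0 / s N)
      atTop (nhds 0)) :
    ∀ᶠ N : ℕ in atTop,
      (2/3) * ((1 / s N) * Real.log ((s N)^3 / (μ N)^3)) <
        (1 / s N) * Real.log ((N : ℝ) * (s N)^3 /
          (μ N * max ((N : ℝ) * (μ N)^2) (r N * max (Real.log ((N : ℝ) * r N)) 0))) ∧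
      (1 / s N) * Real.log ((N : ℝ) * (s N)^3 /
          (μ N * max ((N : ℝ) * (μ N)^2) (r N * max (Real.log ((N : ℝ) * r N)) 0))) ≤
        (1 / s N) * Real.log ((s N)^3 / (μ N)^3) := by
  have hms : Tendsto (fun N : ℕ => μ N / s N) atTop (nhds 0) := by
    have h := h2.mul h1.inv_tendsto_atTop
    rw [mul_zero] at h
    refine h.congr' ?_
    filter_upwards [h1.eventually_gt_atTop 0] with N hN
    have hμp := (hμ N).1
    have hsp := (hs N).1
    have hN0 : (N : ℝ) ≠ 0 := by
      rintro h0'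
      rw [h0'] at hN; simp at hN
    simp only [Pi.inv_apply]
    field_simp
  have e1 : ∀ᶠ N : ℕ in atTop, μ N / s N < 1 := hms.eventually_lt_const one_pos
  have e2 : ∀ᶠ N : ℕ in atTop,
      r N * max (Real.log ((N : ℝ) * r N)) 0 / s N < 1 := h3.eventually_lt_const one_pos
  have e3 : ∀ᶠ N : ℕ in atTop, (1 : ℝ) ≤ (N : ℝ) * μ N := h1.eventually_ge_atTop 1
  filter_upwards [e1, e2, e3] with N he1 he2 he3
  have hμp := (hμ N).1
  have hsp := (hs N).1
  have hrnn := (hr N).1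
  set L := r N * max (Real.log ((N : ℝ) * r N)) 0 with hL
  set M := max ((N : ℝ) * (μ N)^2) L with hM
  have hNpos : (0 : ℝ) < N := by
    rcases Nat.eq_zero_or_pos N with h | h
    · exfalso; rw [h] at he3; push_cast at he3; nlinarith [(hμ N).2]
    · exact_mod_cast h
  have hLnn : 0 ≤ L := mul_nonneg hrnn (le_max_right _ _)
  have hμs : μ N < s N := by rwa [div_lt_one hsp] at he1
  have hLs : L < s N := by rwa [div_lt_one hsp] at he2
  have hMpos : 0 < M := lt_of_lt_of_le (by positivity) (le_max_left _ L)
  have hMle : (N : ℝ) * (μ N)^2 ≤ M := le_max_left _ _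
  have hMlt : M < (N : ℝ) * s N * μ N := by
    refine max_lt (by nlinarith) (lt_of_lt_of_le hLs ?_)
    nlinarith
  constructor
  · have key : (s N / μ N)^2 < (N : ℝ) * (s N)^3 / (μ N * M) := by
      rw [div_pow, div_lt_div_iff₀ (by positivity) (by positivity)]
      nlinarith [mul_lt_mul_of_pos_left hMlt (show (0:ℝ) < (s N)^2 * μ N by positivity)]
    have hlog : Real.log ((s N / μ N)^2) <
        Real.log ((N : ℝ) * (s N)^3 / (μ N * M)) :=
      Real.log_lt_log (by positivity) key
    have e : (2/3) * ((1 / s N) * Real.log ((s N)^3 / (μ N)^3)) =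
        (1 / s N) * Real.log ((s N / μ N)^2) := by
      rw [show (s N)^3 / (μ N)^3 = (s N / μ N)^3 by rw [div_pow],
        Real.log_pow, Real.log_pow]
      push_cast
      ring
    rw [e]
    exact mul_lt_mul_of_pos_left hlog (by positivity)
  · have hub : (N : ℝ) * (s N)^3 / (μ N * M) ≤ (s N)^3 / (μ N)^3 := by
      rw [div_le_div_iff₀ (by positivity) (by positivity)]
      nlinarith [mul_le_mul_of_nonneg_left hMle
        (show (0:ℝ) ≤ (s N)^3 * μ N by positivity)]
    have hlog : Real.log ((N : ℝ) * (s N)^3 / (μ N * M)) ≤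
        Real.log ((s N)^3 / (μ N)^3) := Real.log_le_log (by positivity) hub
    exact mul_le_mul_of_nonneg_left hlog (by positivity)
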